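/- Let p ≥ 5 be a prime and r a positive integer. Let S1 = Σ_{i1+i2+i3+i4=2p^r, i1,i2,i3,i4∈𝒫_p} (-1)^{i1}/(i1·i2·i3·i4) and S2 = Σ_{i1+i2+i3+i4=2p^r, i1,i2,i3,i4∈𝒫_p} (-1)^{i1+i2}/(i1·i2·i3·i4), where each sum is over quadruples of positive integers summing to 2p^r with all entries coprime to p. Then the following exact identity of rational numbers holds: 4·S1 + 3·S2 = (1/2)·Σ_{i1+i2+i3+i4=p^r, all ij∈𝒫_p} 1/(i1·i2·i3·i4) − Σ_{i1+i2+i3+i4=2p^r, all ij∈𝒫_p} 1/(i1·i2·i3·i4). -/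

import Mathlib

private lemma reindex4 (p n : ℕ) (σ : Equiv.Perm (Fin 4)) (g : (Fin 4 → ℕ) → ℚ) :
    ∑ v ∈ (Finset.Nat.antidiagonalTuple 4 n).filter
        (fun v => ∀ i, 0 < v i ∧ Nat.Coprime (v i) p), g (v ∘ σ) =
    ∑ v ∈ (Finset.Nat.antidiagonalTuple 4 n).filter
        (fun v => ∀ i, 0 < v i ∧ Nat.Coprime (v i) p), g v := by
  apply Finset.sum_nbij' (fun v => v ∘ σ) (fun v => v ∘ σ.symm)
  · intro v hv
    simp only [Finset.mem_filter, Finset.Nat.mem_antidiagonalTuple] at hv ⊢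
    exact ⟨by rw [← hv.1]; exact Equiv.sum_comp σ v, fun i => hv.2 (σ i)⟩
  · intro v hv
    simp only [Finset.mem_filter, Finset.Nat.mem_antidiagonalTuple] at hv ⊢
    exact ⟨by rw [← hv.1]; exact Equiv.sum_comp σ.symm v, fun i => hv.2 (σ.symm i)⟩
  · intro v _; funext i; simp
  · intro v _; funext i; simp
  · intro v _; rfl

private lemma neg_one_pow_congr_aux {a b : ℕ} (h : a % 2 = b % 2) :
    (-1 : ℚ) ^ a = (-1) ^ b := by
  conv_lhs => rw [← Nat.div_add_mod a 2]
  conv_rhs => rw [← Nat.div_add_mod b 2]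
  rw [pow_add, pow_add, pow_mul, pow_mul]
  simp [h]

private lemma neg_one_pow_sq (n : ℕ) : (-1 : ℚ) ^ n * (-1) ^ n = 1 := by
  rw [← pow_add]; exact Even.neg_one_pow ⟨n, rfl⟩

theorem alt_four_sum_eq_harmonic_sums (p : ℕ) (hp : p.Prime) (hp5 : 5 ≤ p)
    (r : ℕ) (hr : 0 < r) :
    (4 * (∑ v ∈ (Finset.Nat.antidiagonalTuple 4 (2 * p ^ r)).filter
          (fun v => ∀ i, 0 < v i ∧ Nat.Coprime (v i) p),
        (-1 : ℚ) ^ (v 0) / ((v 0 : ℚ) * (v 1 : ℚ) * (v 2 : ℚ) * (v 3 : ℚ))) +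
     3 * (∑ v ∈ (Finset.Nat.antidiagonalTuple 4 (2 * p ^ r)).filter
          (fun v => ∀ i, 0 < v i ∧ Nat.Coprime (v i) p),
        (-1 : ℚ) ^ (v 0 + v 1) / ((v 0 : ℚ) * (v 1 : ℚ) * (v 2 : ℚ) * (v 3 : ℚ)))) =
    (1 / 2 : ℚ) * (∑ v ∈ (Finset.Nat.antidiagonalTuple 4 (p ^ r)).filter
          (fun v => ∀ i, 0 < v i ∧ Nat.Coprime (v i) p),
        1 / ((v 0 : ℚ) * (v 1 : ℚ) * (v 2 : ℚ) * (v 3 : ℚ))) -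
      (∑ v ∈ (Finset.Nat.antidiagonalTuple 4 (2 * p ^ r)).filter
          (fun v => ∀ i, 0 < v i ∧ Nat.Coprime (v i) p),
        1 / ((v 0 : ℚ) * (v 1 : ℚ) * (v 2 : ℚ) * (v 3 : ℚ))) := by
  classical
  set A := (Finset.Nat.antidiagonalTuple 4 (2 * p ^ r)).filter
      (fun v => ∀ i, 0 < v i ∧ Nat.Coprime (v i) p) with hA
  set B := (Finset.Nat.antidiagonalTuple 4 (p ^ r)).filter
      (fun v => ∀ i, 0 < v i ∧ Nat.Coprime (v i) p) with hB
  have hsumA : ∀ v ∈ A, v 0 + v 1 + v 2 + v 3 = 2 * p ^ r := by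
    intro v hv
    rw [hA, Finset.mem_filter, Finset.Nat.mem_antidiagonalTuple] at hv
    rw [← hv.1, Fin.sum_univ_four]
  have hPA : ∀ v ∈ A, ∀ i, 0 < v i ∧ Nat.Coprime (v i) p := by
    intro v hv
    rw [hA, Finset.mem_filter] at hv
    exact hv.2
  -- symmetry lemmas
  have h1 : ∑ v ∈ A, (-1 : ℚ) ^ (v 1) / ((v 0 : ℚ) * (v 1 : ℚ) * (v 2 : ℚ) * (v 3 : ℚ))
      = ∑ v ∈ A, (-1 : ℚ) ^ (v 0) / ((v 0 : ℚ) * (v 1 : ℚ) * (v 2 : ℚ) * (v 3 : ℚ)) := by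
    rw [hA, ← reindex4 p (2 * p ^ r) (Equiv.swap 0 1)
        (fun v => (-1 : ℚ) ^ (v 0) / ((v 0 : ℚ) * (v 1 : ℚ) * (v 2 : ℚ) * (v 3 : ℚ)))]
    refine Finset.sum_congr rfl fun v _ => ?_
    simp only [Function.comp_apply, Equiv.swap_apply_def, Fin.ext_iff,
      show ((0:Fin 4):ℕ) = 0 from rfl, show ((1:Fin 4):ℕ) = 1 from rfl,
      show ((2:Fin 4):ℕ) = 2 from rfl, show ((3:Fin 4):ℕ) = 3 from rfl]
    norm_num
    ring
  have h2 : ∑ v ∈ A, (-1 : ℚ) ^ (v 2) / ((v 0 : ℚ) * (v 1 : ℚ) * (v 2 : ℚ) * (v 3 : ℚ))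
      = ∑ v ∈ A, (-1 : ℚ) ^ (v 0) / ((v 0 : ℚ) * (v 1 : ℚ) * (v 2 : ℚ) * (v 3 : ℚ)) := by
    rw [hA, ← reindex4 p (2 * p ^ r) (Equiv.swap 0 2)
        (fun v => (-1 : ℚ) ^ (v 0) / ((v 0 : ℚ) * (v 1 : ℚ) * (v 2 : ℚ) * (v 3 : ℚ)))]
    refine Finset.sum_congr rfl fun v _ => ?_
    simp only [Function.comp_apply, Equiv.swap_apply_def, Fin.ext_iff,
      show ((0:Fin 4):ℕ) = 0 from rfl, show ((1:Fin 4):ℕ) = 1 from rfl,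
      show ((2:Fin 4):ℕ) = 2 from rfl, show ((3:Fin 4):ℕ) = 3 from rfl]
    norm_num
    ring
  have h3 : ∑ v ∈ A, (-1 : ℚ) ^ (v 3) / ((v 0 : ℚ) * (v 1 : ℚ) * (v 2 : ℚ) * (v 3 : ℚ))
      = ∑ v ∈ A, (-1 : ℚ) ^ (v 0) / ((v 0 : ℚ) * (v 1 : ℚ) * (v 2 : ℚ) * (v 3 : ℚ)) := by
    rw [hA, ← reindex4 p (2 * p ^ r) (Equiv.swap 0 3)
        (fun v => (-1 : ℚ) ^ (v 0) / ((v 0 : ℚ) * (v 1 : ℚ) * (v 2 : ℚ) * (v 3 : ℚ)))]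
    refine Finset.sum_congr rfl fun v _ => ?_
    simp only [Function.comp_apply, Equiv.swap_apply_def, Fin.ext_iff,
      show ((0:Fin 4):ℕ) = 0 from rfl, show ((1:Fin 4):ℕ) = 1 from rfl,
      show ((2:Fin 4):ℕ) = 2 from rfl, show ((3:Fin 4):ℕ) = 3 from rfl]
    norm_num
    ring
  have h02 : ∑ v ∈ A, (-1 : ℚ) ^ (v 0 + v 2) / ((v 0 : ℚ) * (v 1 : ℚ) * (v 2 : ℚ) * (v 3 : ℚ))
      = ∑ v ∈ A, (-1 : ℚ) ^ (v 0 + v 1) / ((v 0 : ℚ) * (v 1 : ℚ) * (v 2 : ℚ) * (v 3 : ℚ)) := by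
    rw [hA, ← reindex4 p (2 * p ^ r) (Equiv.swap 1 2)
        (fun v => (-1 : ℚ) ^ (v 0 + v 1) / ((v 0 : ℚ) * (v 1 : ℚ) * (v 2 : ℚ) * (v 3 : ℚ)))]
    refine Finset.sum_congr rfl fun v _ => ?_
    simp only [Function.comp_apply, Equiv.swap_apply_def, Fin.ext_iff,
      show ((0:Fin 4):ℕ) = 0 from rfl, show ((1:Fin 4):ℕ) = 1 from rfl,
      show ((2:Fin 4):ℕ) = 2 from rfl, show ((3:Fin 4):ℕ) = 3 from rfl]
    norm_num
    ring
  have h03 : ∑ v ∈ A, (-1 : ℚ) ^ (v 0 + v 3) / ((v 0 : ℚ) * (v 1 : ℚ) * (v 2 : ℚ) * (v 3 : ℚ))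
      = ∑ v ∈ A, (-1 : ℚ) ^ (v 0 + v 1) / ((v 0 : ℚ) * (v 1 : ℚ) * (v 2 : ℚ) * (v 3 : ℚ)) := by
    rw [hA, ← reindex4 p (2 * p ^ r) (Equiv.swap 1 3)
        (fun v => (-1 : ℚ) ^ (v 0 + v 1) / ((v 0 : ℚ) * (v 1 : ℚ) * (v 2 : ℚ) * (v 3 : ℚ)))]
    refine Finset.sum_congr rfl fun v _ => ?_
    simp only [Function.comp_apply, Equiv.swap_apply_def, Fin.ext_iff,
      show ((0:Fin 4):ℕ) = 0 from rfl, show ((1:Fin 4):ℕ) = 1 from rfl,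
      show ((2:Fin 4):ℕ) = 2 from rfl, show ((3:Fin 4):ℕ) = 3 from rfl]
    norm_num
    ring
  -- complement-pair lemmas via parity
  have h23 : ∑ v ∈ A, (-1 : ℚ) ^ (v 2 + v 3) / ((v 0 : ℚ) * (v 1 : ℚ) * (v 2 : ℚ) * (v 3 : ℚ))
      = ∑ v ∈ A, (-1 : ℚ) ^ (v 0 + v 1) / ((v 0 : ℚ) * (v 1 : ℚ) * (v 2 : ℚ) * (v 3 : ℚ)) := by
    refine Finset.sum_congr rfl fun v hv => ?_
    have h := hsumA v hv
    rw [neg_one_pow_congr_aux (a := v 2 + v 3) (b := v 0 + v 1) (by omega)]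
  have h13 : ∑ v ∈ A, (-1 : ℚ) ^ (v 1 + v 3) / ((v 0 : ℚ) * (v 1 : ℚ) * (v 2 : ℚ) * (v 3 : ℚ))
      = ∑ v ∈ A, (-1 : ℚ) ^ (v 0 + v 2) / ((v 0 : ℚ) * (v 1 : ℚ) * (v 2 : ℚ) * (v 3 : ℚ)) := by
    refine Finset.sum_congr rfl fun v hv => ?_
    have h := hsumA v hv
    rw [neg_one_pow_congr_aux (a := v 1 + v 3) (b := v 0 + v 2) (by omega)]
  have h12 : ∑ v ∈ A, (-1 : ℚ) ^ (v 1 + v 2) / ((v 0 : ℚ) * (v 1 : ℚ) * (v 2 : ℚ) * (v 3 : ℚ))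
      = ∑ v ∈ A, (-1 : ℚ) ^ (v 0 + v 3) / ((v 0 : ℚ) * (v 1 : ℚ) * (v 2 : ℚ) * (v 3 : ℚ)) := by
    refine Finset.sum_congr rfl fun v hv => ?_
    have h := hsumA v hv
    rw [neg_one_pow_congr_aux (a := v 1 + v 2) (b := v 0 + v 3) (by omega)]
  -- the key evaluation of the master sum
  have key : ∑ v ∈ A, ((1 + (-1 : ℚ) ^ (v 0)) * (1 + (-1 : ℚ) ^ (v 1)) *
        (1 + (-1 : ℚ) ^ (v 2)) * (1 + (-1 : ℚ) ^ (v 3))) /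
        ((v 0 : ℚ) * (v 1 : ℚ) * (v 2 : ℚ) * (v 3 : ℚ))
      = ∑ w ∈ B, 1 / ((w 0 : ℚ) * (w 1 : ℚ) * (w 2 : ℚ) * (w 3 : ℚ)) := by
    rw [← Finset.sum_filter_of_ne (p := fun v => ∀ i, Even (v i)) ?_]
    · apply Finset.sum_nbij' (fun v => fun j => v j / 2) (fun w => fun j => 2 * w j)
      · intro v hv
        simp only [Finset.mem_filter, hA, hB, Finset.Nat.mem_antidiagonalTuple,
          Fin.sum_univ_four, Nat.even_iff] at hv ⊢
        obtain ⟨⟨hsum, hP⟩, hE⟩ := hv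
        constructor
        · have e0 := hE 0; have e1 := hE 1; have e2 := hE 2; have e3 := hE 3
          omega
        · intro i
          refine ⟨?_, Nat.Coprime.coprime_dvd_left
            (Nat.div_dvd_of_dvd (Nat.even_iff.mpr (hE i)).two_dvd) (hP i).2⟩
          have := (hP i).1; have := hE i; omega
      · intro w hw
        simp only [Finset.mem_filter, hA, hB, Finset.Nat.mem_antidiagonalTuple,
          Fin.sum_univ_four] at hw ⊢
        obtain ⟨hsum, hP⟩ := hw
        refine ⟨⟨by omega, fun i => ⟨by have := (hP i).1; omega, ?_⟩⟩, fun i => ⟨w i, by ring⟩⟩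
        exact Nat.Coprime.mul ((Nat.coprime_primes Nat.prime_two hp).mpr (by omega)) (hP i).2
      · intro v hv
        rw [Finset.mem_filter] at hv
        funext j
        have := Nat.even_iff.mp (hv.2 j)
        show 2 * (v j / 2) = v j
        omega
      · intro w _
        funext j
        show 2 * w j / 2 = w j
        omega
      · intro v hv
        rw [Finset.mem_filter] at hv
        have he : ∀ j : Fin 4, (-1 : ℚ) ^ (v j) = 1 := fun j =>
          Even.neg_one_pow (hv.2 j)
        have hc : ∀ j : Fin 4, (v j : ℚ) = 2 * ((v j / 2 : ℕ) : ℚ) := by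
          intro j
          have h2 : 2 * (v j / 2) = v j := by
            have := Nat.even_iff.mp (hv.2 j); omega
          conv_lhs => rw [← h2]
          push_cast
          ring
        have hn : ∀ j : Fin 4, ((v j / 2 : ℕ) : ℚ) ≠ 0 := by
          intro j
          have hpos := ((hPA v hv.1) j).1
          have := Nat.even_iff.mp (hv.2 j)
          have : 0 < v j / 2 := by omega
          positivity
        rw [he 0, he 1, he 2, he 3, hc 0, hc 1, hc 2, hc 3]
        have h0 := hn 0; have h1 := hn 1; have h2 := hn 2; have h3 := hn 3
        field_simp
        ring
    · intro v _ hne i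
      rcases Nat.even_or_odd (v i) with h | h
      · exact h
      · exfalso
        apply hne
        have hodd : Odd (v 0) ∨ Odd (v 1) ∨ Odd (v 2) ∨ Odd (v 3) := by
          rcases i with ⟨iv, hiv⟩
          interval_cases iv
          · exact Or.inl h
          · exact Or.inr (Or.inl h)
          · exact Or.inr (Or.inr (Or.inl h))
          · exact Or.inr (Or.inr (Or.inr h))
        rcases hodd with h' | h' | h' | h' <;> rw [h'.neg_one_pow] <;> norm_num
  -- expansion of the master sum
  have expand : ∑ v ∈ A, ((1 + (-1 : ℚ) ^ (v 0)) * (1 + (-1 : ℚ) ^ (v 1)) *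
        (1 + (-1 : ℚ) ^ (v 2)) * (1 + (-1 : ℚ) ^ (v 3))) /
        ((v 0 : ℚ) * (v 1 : ℚ) * (v 2 : ℚ) * (v 3 : ℚ))
      = ∑ v ∈ A, (2 * (1 / ((v 0 : ℚ) * (v 1 : ℚ) * (v 2 : ℚ) * (v 3 : ℚ)))
        + 2 * ((-1 : ℚ) ^ (v 0) / ((v 0 : ℚ) * (v 1 : ℚ) * (v 2 : ℚ) * (v 3 : ℚ)))
        + 2 * ((-1 : ℚ) ^ (v 1) / ((v 0 : ℚ) * (v 1 : ℚ) * (v 2 : ℚ) * (v 3 : ℚ)))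
        + 2 * ((-1 : ℚ) ^ (v 2) / ((v 0 : ℚ) * (v 1 : ℚ) * (v 2 : ℚ) * (v 3 : ℚ)))
        + 2 * ((-1 : ℚ) ^ (v 3) / ((v 0 : ℚ) * (v 1 : ℚ) * (v 2 : ℚ) * (v 3 : ℚ)))
        + (-1 : ℚ) ^ (v 0 + v 1) / ((v 0 : ℚ) * (v 1 : ℚ) * (v 2 : ℚ) * (v 3 : ℚ))
        + (-1 : ℚ) ^ (v 0 + v 2) / ((v 0 : ℚ) * (v 1 : ℚ) * (v 2 : ℚ) * (v 3 : ℚ))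
        + (-1 : ℚ) ^ (v 0 + v 3) / ((v 0 : ℚ) * (v 1 : ℚ) * (v 2 : ℚ) * (v 3 : ℚ))
        + (-1 : ℚ) ^ (v 1 + v 2) / ((v 0 : ℚ) * (v 1 : ℚ) * (v 2 : ℚ) * (v 3 : ℚ))
        + (-1 : ℚ) ^ (v 1 + v 3) / ((v 0 : ℚ) * (v 1 : ℚ) * (v 2 : ℚ) * (v 3 : ℚ))
        + (-1 : ℚ) ^ (v 2 + v 3) / ((v 0 : ℚ) * (v 1 : ℚ) * (v 2 : ℚ) * (v 3 : ℚ))) := by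
    refine Finset.sum_congr rfl fun v hv => ?_
    have hsum := hsumA v hv
    have habcd : (-1 : ℚ) ^ (v 0) * (-1) ^ (v 1) * (-1) ^ (v 2) * (-1) ^ (v 3) = 1 := by
      rw [← pow_add, ← pow_add, ← pow_add]
      exact Even.neg_one_pow (by rw [hsum]; exact ⟨p ^ r, by ring⟩)
    have hnum : (1 + (-1 : ℚ) ^ (v 0)) * (1 + (-1 : ℚ) ^ (v 1)) *
        (1 + (-1 : ℚ) ^ (v 2)) * (1 + (-1 : ℚ) ^ (v 3))
        = 2 + 2 * ((-1 : ℚ) ^ (v 0) + (-1) ^ (v 1) + (-1) ^ (v 2) + (-1) ^ (v 3))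
          + ((-1 : ℚ) ^ (v 0) * (-1) ^ (v 1) + (-1) ^ (v 0) * (-1) ^ (v 2)
            + (-1) ^ (v 0) * (-1) ^ (v 3) + (-1) ^ (v 1) * (-1) ^ (v 2)
            + (-1) ^ (v 1) * (-1) ^ (v 3) + (-1) ^ (v 2) * (-1) ^ (v 3)) := by
      linear_combination (1 + (-1 : ℚ) ^ (v 0) + (-1) ^ (v 1) + (-1) ^ (v 2) + (-1) ^ (v 3)) * habcd
        - (-1 : ℚ) ^ (v 0) * (-1) ^ (v 1) * (-1) ^ (v 2) * neg_one_pow_sq (v 3)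
        - (-1 : ℚ) ^ (v 0) * (-1) ^ (v 1) * (-1) ^ (v 3) * neg_one_pow_sq (v 2)
        - (-1 : ℚ) ^ (v 0) * (-1) ^ (v 2) * (-1) ^ (v 3) * neg_one_pow_sq (v 1)
        - (-1 : ℚ) ^ (v 1) * (-1) ^ (v 2) * (-1) ^ (v 3) * neg_one_pow_sq (v 0)
    simp only [pow_add]
    rw [hnum]
    ring
  rw [expand] at key
  simp only [Finset.sum_add_distrib, ← Finset.mul_sum] at key
  rw [h1, h2, h3, h02, h03, h12, h13, h23] at key
  linarith [key]
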